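/- Let p ≥ 1 be an integer, c > 0, and define A_k = (c/2)^p·(k/(p+1))^{p+1} for k ≥ 0. Then for every k ≥ 0: (A_{k+1} − A_k)^{(p+1)/p} ≤ (c/2)·A_{k+1}. -/

import Mathlib

theorem stmt19 (p : ℕ) (hp : 1 ≤ p) (c : ℝ) (hc : 0 < c)
    (A : ℕ → ℝ)
    (hA : ∀ k : ℕ, A k = (c / 2) ^ p * ((k : ℝ) / (p + 1)) ^ (p + 1)) :
    ∀ k : ℕ, (A (k + 1) - A k) ^ (((p : ℝ) + 1) / p) ≤ c / 2 * A (k + 1) := by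
  intro k
  have hpR : (0:ℝ) < p := by exact_mod_cast hp
  have hp1 : (0:ℝ) < (p:ℝ) + 1 := by linarith
  set x : ℝ := (k:ℝ) + 1 with hx
  set y : ℝ := (k:ℝ) with hy
  have hy0 : 0 ≤ y := Nat.cast_nonneg k
  have hx0 : (0:ℝ) < x := by positivity
  have hxy : y ≤ x := by simp [hx, hy]
  -- key: x^(p+1) - y^(p+1) ≤ (p+1) * x^p
  have hgeom := geom_sum₂_mul x y (p + 1)
  have hsum : (∑ i ∈ Finset.range (p + 1), x ^ i * y ^ (p + 1 - 1 - i))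
      ≤ (p + 1) * x ^ p := by
    have : ∀ i ∈ Finset.range (p + 1), x ^ i * y ^ (p + 1 - 1 - i) ≤ x ^ p := by
      intro i hi
      have hi' : i ≤ p := Nat.lt_succ_iff.mp (Finset.mem_range.mp hi)
      calc x ^ i * y ^ (p + 1 - 1 - i) ≤ x ^ i * x ^ (p - i) := by
            have : y ^ (p + 1 - 1 - i) ≤ x ^ (p - i) := by
              have h1 : p + 1 - 1 - i = p - i := by omega
              rw [h1]
              exact pow_le_pow_left₀ hy0 hxy _
            exact mul_le_mul_of_nonneg_left this (by positivity)
        _ = x ^ p := by rw [← pow_add]; congr 1; omega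
    calc (∑ i ∈ Finset.range (p + 1), x ^ i * y ^ (p + 1 - 1 - i))
        ≤ ∑ _i ∈ Finset.range (p + 1), x ^ p := Finset.sum_le_sum this
      _ = (p + 1) * x ^ p := by
          rw [Finset.sum_const, Finset.card_range]; push_cast; ring
  have key : x ^ (p + 1) - y ^ (p + 1) ≤ ((p:ℝ) + 1) * x ^ p := by
    have hx1 : x - y = 1 := by simp [hx, hy]
    calc x ^ (p + 1) - y ^ (p + 1)
        = (∑ i ∈ Finset.range (p + 1), x ^ i * y ^ (p + 1 - 1 - i)) * (x - y) := hgeom.symm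
      _ = ∑ i ∈ Finset.range (p + 1), x ^ i * y ^ (p + 1 - 1 - i) := by rw [hx1, mul_one]
      _ ≤ ((p:ℝ) + 1) * x ^ p := hsum
  set z : ℝ := c / 2 * x / ((p:ℝ) + 1) with hz
  have hz0 : 0 ≤ z := by positivity
  have hdiff_nonneg : 0 ≤ A (k + 1) - A k := by
    rw [hA, hA]
    push_cast
    have : ((k:ℝ) / (p + 1)) ^ (p + 1) ≤ (((k:ℝ) + 1) / (p + 1)) ^ (p + 1) := by
      gcongr <;> linarith
    nlinarith [pow_pos (div_pos hc two_pos) p]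
  have hdiff_le : A (k + 1) - A k ≤ z ^ p := by
    rw [hA, hA]
    push_cast
    have hexp : (c / 2) ^ p * ((((k:ℝ) + 1) / (p + 1)) ^ (p + 1) - ((k:ℝ) / (p + 1)) ^ (p + 1))
        = (c / 2) ^ p / ((p:ℝ) + 1) ^ (p + 1) * (x ^ (p + 1) - y ^ (p + 1)) := by
      rw [hx, hy]
      simp only [div_pow]
      field_simp
    have hzp : z ^ p = (c / 2) ^ p / ((p:ℝ) + 1) ^ (p + 1) * (((p:ℝ) + 1) * x ^ p) := by
      rw [hz, div_pow, mul_pow]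
      field_simp
      ring
    have h1 : (c / 2) ^ p / ((p:ℝ) + 1) ^ (p + 1) * (x ^ (p + 1) - y ^ (p + 1))
        ≤ (c / 2) ^ p / ((p:ℝ) + 1) ^ (p + 1) * (((p:ℝ) + 1) * x ^ p) :=
      mul_le_mul_of_nonneg_left key (by positivity)
    calc (c / 2) ^ p * ((((k:ℝ) + 1) / (p + 1)) ^ (p + 1)) - (c / 2) ^ p * (((k:ℝ) / (p + 1)) ^ (p + 1))
        = (c / 2) ^ p * ((((k:ℝ) + 1) / (p + 1)) ^ (p + 1) - ((k:ℝ) / (p + 1)) ^ (p + 1)) := by ring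
      _ = (c / 2) ^ p / ((p:ℝ) + 1) ^ (p + 1) * (x ^ (p + 1) - y ^ (p + 1)) := hexp
      _ ≤ (c / 2) ^ p / ((p:ℝ) + 1) ^ (p + 1) * (((p:ℝ) + 1) * x ^ p) := h1
      _ = z ^ p := hzp.symm
  have he0 : 0 ≤ ((p:ℝ) + 1) / p := by positivity
  have step1 : (A (k + 1) - A k) ^ (((p : ℝ) + 1) / p)
      ≤ (z ^ p) ^ (((p : ℝ) + 1) / p) :=
    Real.rpow_le_rpow hdiff_nonneg hdiff_le he0
  have step2 : (z ^ p : ℝ) ^ (((p : ℝ) + 1) / p) = z ^ (p + 1) := by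
    rw [← Real.rpow_natCast z p, ← Real.rpow_mul hz0]
    have : (p:ℝ) * (((p : ℝ) + 1) / p) = ((p:ℝ) + 1) := by
      field_simp
    rw [this]
    rw [show ((p:ℝ) + 1) = ((p + 1 : ℕ) : ℝ) by push_cast; ring, Real.rpow_natCast]
  have step3 : z ^ (p + 1) = c / 2 * A (k + 1) := by
    rw [hA, hz, hx, hy]
    push_cast
    simp only [div_pow, mul_pow]
    field_simp
    ring
  calc (A (k + 1) - A k) ^ (((p : ℝ) + 1) / p)
      ≤ (z ^ p : ℝ) ^ (((p : ℝ) + 1) / p) := step1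
    _ = z ^ (p + 1) := step2
    _ = c / 2 * A (k + 1) := step3
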